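/- Fix an integer k ≥ 2. For each subset S ⊆ [k] with |S| ≥ 2 let B_S be the Reutenauer basis of L_S, and for each singleton S = {a} let B_S = {a}; fix any total order ≤ on the disjoint union B = ⊔_{∅ ≠ S ⊆ [k]} B_S. Then the set Π of all products P_1 P_2 ⋯ P_m, taken over all set partitions [k] = S_1 ⊔ S_2 ⊔ ⋯ ⊔ S_m and all choices P_i ∈ B_{S_i} with P_1 < P_2 < ⋯ < P_m in the chosen order, is a ℤ-basis of C_{k−1}^{(k)}, the free ℤ-module on injective words of length k in [k]. -/

import Mathlib

noncomputable section

/-- The free associative `R`-algebra on noncommuting generators labelled by `Fin k`,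
realized as the monoid algebra on the free monoid. -/
abbrev FA (R : Type) [CommRing R] (k : ℕ) : Type := MonoidAlgebra R (FreeMonoid (Fin k))

/-- A word in the letters `Fin k`, as an element of the free associative algebra. -/
def wordElem (R : Type) [CommRing R] (k : ℕ) (w : List (Fin k)) : FA R k :=
  MonoidAlgebra.single (FreeMonoid.ofList w) 1

/-- `C_{n-1}^{(k)}`: the free `R`-submodule spanned by the injective words of length `n`. -/
def wordsLen (R : Type) [CommRing R] (k n : ℕ) : Submodule R (FA R k) :=
  Submodule.span R {x | ∃ w : List (Fin k), w.Nodup ∧ w.length = n ∧ x = wordElem R k w}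

/-- Alternating sum of letter deletions of a single word. -/
def Dword (R : Type) [CommRing R] (k : ℕ) (w : List (Fin k)) : FA R k :=
  ∑ j : Fin w.length, ((-1 : R) ^ (j : ℕ)) • wordElem R k (w.eraseIdx (j : ℕ))

/-- The differential `D`, extended linearly to the whole free algebra. -/
def Ddiff (R : Type) [CommRing R] (k : ℕ) : FA R k →ₗ[R] FA R k :=
  (Finsupp.lsum R fun w : FreeMonoid (Fin k) =>
    LinearMap.toSpanSingleton R (FA R k) (Dword R k (FreeMonoid.toList w)))
    ∘ₗ (MonoidAlgebra.coeffLinearEquiv (M := FreeMonoid (Fin k)) (S := R) R).toLinearMap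

/-- `IsLie R k S x`: `x` is an iterated graded Lie bracket of the letters of `S`, every
letter of `S` appearing exactly once.  Here `[p, q] = pq - (-1)^(|p||q|) qp`. -/
inductive IsLie (R : Type) [CommRing R] (k : ℕ) : Finset (Fin k) → FA R k → Prop
  | letter (a : Fin k) : IsLie R k {a} (wordElem R k [a])
  | bracket {S T : Finset (Fin k)} {p q : FA R k} (hST : Disjoint S T)
      (hp : IsLie R k S p) (hq : IsLie R k T q) :
      IsLie R k (S ∪ T) (p * q - ((-1 : R) ^ (S.card * T.card)) • (q * p))

/-- An `L`-product: a product `P₁ ⋯ P_m` over a set partition `[k] = S₁ ⊔ ⋯ ⊔ S_m`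
with each `P i` in the submodule `L_{S i}` (so every block has at least two elements). -/
def IsLProduct (R : Type) [CommRing R] (k : ℕ) (x : FA R k) : Prop :=
  ∃ (m : ℕ) (S : Fin m → Finset (Fin k)) (P : Fin m → FA R k),
    (∀ i, 2 ≤ (S i).card) ∧
    (∀ i, P i ∈ Submodule.span R {y : FA R k | IsLie R k (S i) y}) ∧
    (∀ i j, i ≠ j → Disjoint (S i) (S j)) ∧
    Finset.univ.biUnion S = (Finset.univ : Finset (Fin k)) ∧
    x = (List.ofFn P).prod

/-- Auxiliary recursion for left-normed brackets. -/
def lbrkAux (R : Type) [CommRing R] (k : ℕ) : FA R k → ℕ → List (Fin k) → FA R k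
  | x, _, [] => x
  | x, n, a :: rest =>
      lbrkAux R k (x * wordElem R k [a] - ((-1 : R) ^ n) • (wordElem R k [a] * x)) (n + 1) rest

/-- The left-normed iterated bracket `[[⋯[[a₁,a₂],a₃],⋯],a_m]` of a list of letters. -/
def leftBracket (R : Type) [CommRing R] (k : ℕ) : List (Fin k) → FA R k
  | [] => 0
  | a :: rest => lbrkAux R k (wordElem R k [a]) 1 rest

/-- The Reutenauer basis `B_S` of `L_S`: left-normed brackets of enumerations of `S`
starting with the smallest element.  For a singleton `S = {a}` this is `{a}`. -/
def ReutSet (R : Type) [CommRing R] (k : ℕ) (S : Finset (Fin k)) : Set (FA R k) :=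
  {x | ∃ l : List (Fin k), l.Nodup ∧ l.toFinset = S ∧
        (∃ s t, l = s :: t ∧ ∀ a ∈ S, s ≤ a) ∧ x = leftBracket R k l}

/-- The disjoint union `B = ⊔_{∅ ≠ S ⊆ [k]} B_S`, as pairs `(S, P)` with `P ∈ B_S`. -/
def BIdx (R : Type) [CommRing R] (k : ℕ) : Type :=
  {p : Finset (Fin k) × FA R k // p.1.Nonempty ∧ p.2 ∈ ReutSet R k p.1}

/-- The set `Π` of ascending products `P₁ P₂ ⋯ P_m` over set partitions
`[k] = S₁ ⊔ ⋯ ⊔ S_m` with `P i ∈ B_{S i}`, ascending with respect to `r`. -/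
def PiSet (R : Type) [CommRing R] (k : ℕ) (r : BIdx R k → BIdx R k → Prop) :
    Set (FA R k) :=
  {x | ∃ (m : ℕ) (S : Fin m → Finset (Fin k)) (P : Fin m → FA R k)
        (h : ∀ i, (S i).Nonempty ∧ P i ∈ ReutSet R k (S i)),
      (∀ i j, i ≠ j → Disjoint (S i) (S j)) ∧
      Finset.univ.biUnion S = (Finset.univ : Finset (Fin k)) ∧
      (∀ i j : Fin m, i < j →
        r ⟨(S i, P i), h i⟩ ⟨(S j, P j), h j⟩ ∧ (S i, P i) ≠ (S j, P j)) ∧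
      x = (List.ofFn P).prod}

namespace PfAux
open Submodule

variable {k : ℕ}

theorem wordElem_mul (w v : List (Fin k)) :
    wordElem ℤ k w * wordElem ℤ k v = wordElem ℤ k (w ++ v) := by
  rw [wordElem, wordElem, wordElem, MonoidAlgebra.single_mul_single, one_mul]
  rfl

theorem wordElem_nil : wordElem ℤ k [] = 1 := rfl

theorem wordElem_injective : Function.Injective (wordElem ℤ k) := by
  intro w v h
  rw [wordElem, wordElem, MonoidAlgebra.single, MonoidAlgebra.single,
    MonoidAlgebra.ofCoeff_inj, Finsupp.single_eq_single_iff] at h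
  rcases h with ⟨h, -⟩ | ⟨h, -⟩
  · exact FreeMonoid.ofList.injective h
  · exact absurd h one_ne_zero

theorem wordElem_linearIndependent {ι : Type} (f : ι → List (Fin k)) (hf : Function.Injective f) :
    LinearIndependent ℤ (fun i => wordElem ℤ k (f i)) := by
  have h1 : LinearIndependent ℤ (fun w : FreeMonoid (Fin k) =>
      (MonoidAlgebra.single w (1:ℤ) : MonoidAlgebra ℤ (FreeMonoid (Fin k)))) := by
    convert (MonoidAlgebra.basis (FreeMonoid (Fin k)) ℤ).linearIndependent
    · rfl
    · exact Subsingleton.elim _ _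
  exact h1.comp (fun i => FreeMonoid.ofList (f i))
    (fun a b h => hf (FreeMonoid.ofList.injective h))

theorem jacobi_abstract {A : Type} [Ring A] [Algebra ℤ A] (a b c : ℤ)
    (ha : a*a = 1) (hb : b*b = 1) (hc : c*c = 1) (p u v : A) :
    p*(u*v - c•(v*u)) - (a*b)•((u*v - c•(v*u))*p)
      = ((p*u - a•(u*p))*v - (b*c)•(v*(p*u - a•(u*p))))
        - c•((p*v - b•(v*p))*u - (a*c)•(u*(p*v - b•(v*p)))) := by
  rcases mul_self_eq_one_iff.mp ha with rfl | rfl <;>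
  rcases mul_self_eq_one_iff.mp hb with rfl | rfl <;>
  rcases mul_self_eq_one_iff.mp hc with rfl | rfl <;>
  · simp only [neg_smul, one_smul, one_mul, mul_one, neg_neg, mul_neg, neg_one_mul]
    noncomm_ring

theorem neg_one_pow_mul_self (e : ℕ) : ((-1:ℤ)^e) * ((-1:ℤ)^e) = 1 := by
  rw [← pow_add]; exact Even.neg_one_pow ⟨e, rfl⟩

theorem jacobi (m n o : ℕ) {A : Type} [Ring A] [Algebra ℤ A] (p u v : A) :
    p * (u*v - ((-1:ℤ)^(n*o)) • (v*u)) - ((-1:ℤ)^(m*(n+o))) • ((u*v - ((-1:ℤ)^(n*o)) • (v*u)) * p)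
    = ((p*u - ((-1:ℤ)^(m*n)) • (u*p)) * v - ((-1:ℤ)^((m+n)*o)) • (v * (p*u - ((-1:ℤ)^(m*n)) • (u*p))))
      - ((-1:ℤ)^(n*o)) • ((p*v - ((-1:ℤ)^(m*o)) • (v*p)) * u - ((-1:ℤ)^((m+o)*n)) • (u * (p*v - ((-1:ℤ)^(m*o)) • (v*p)))) := by
  have h1 : ((-1:ℤ))^(m*(n+o)) = ((-1:ℤ)^(m*n)) * ((-1:ℤ)^(m*o)) := by
    rw [Nat.mul_add, pow_add]
  have h2 : ((-1:ℤ))^((m+n)*o) = ((-1:ℤ)^(m*o)) * ((-1:ℤ)^(n*o)) := by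
    rw [Nat.add_mul, pow_add]
  have h3 : ((-1:ℤ))^((m+o)*n) = ((-1:ℤ)^(m*n)) * ((-1:ℤ)^(n*o)) := by
    rw [Nat.add_mul, pow_add, Nat.mul_comm o n]
  rw [h1, h2, h3]
  exact jacobi_abstract _ _ _ (neg_one_pow_mul_self _) (neg_one_pow_mul_self _)
    (neg_one_pow_mul_self _) p u v

theorem bracket_flip (e : ℕ) {A : Type} [Ring A] [Algebra ℤ A] (p q : A) :
    p * q - ((-1:ℤ)^e) • (q*p) = -(((-1:ℤ)^e) • (q * p - ((-1:ℤ)^e) • (p*q))) := by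
  rw [smul_sub, smul_smul, neg_one_pow_mul_self, one_smul, neg_sub]

theorem lbrkAux_snoc (t : List (Fin k)) (x : FA ℤ k) (n : ℕ) (a : Fin k) :
    lbrkAux ℤ k x n (t ++ [a]) =
      lbrkAux ℤ k x n t * wordElem ℤ k [a]
        - ((-1 : ℤ) ^ (n + t.length)) • (wordElem ℤ k [a] * lbrkAux ℤ k x n t) := by
  induction t generalizing x n with
  | nil => simp [lbrkAux]
  | cons b t ih =>
    have h : n + 1 + t.length = n + (t.length + 1) := by omega
    simp only [List.cons_append, lbrkAux, List.length_cons, List.append_eq]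
    rw [ih, h]

theorem leftBracket_snoc (s : Fin k) (t : List (Fin k)) (a : Fin k) :
    leftBracket ℤ k ((s :: t) ++ [a]) =
      leftBracket ℤ k (s :: t) * wordElem ℤ k [a]
        - ((-1 : ℤ) ^ (s :: t).length) • (wordElem ℤ k [a] * leftBracket ℤ k (s :: t)) := by
  simp only [List.cons_append, leftBracket, lbrkAux_snoc, List.length_cons]
  rw [Nat.add_comm 1 t.length]

theorem isLie_lbrkAux (t : List (Fin k)) (x : FA ℤ k) (S : Finset (Fin k)) (n : ℕ)
    (hx : IsLie ℤ k S x) (hn : S.card = n) (ht : ∀ a ∈ t, a ∉ S) (htn : t.Nodup) :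
    IsLie ℤ k (S ∪ t.toFinset) (lbrkAux ℤ k x n t) := by
  induction t generalizing S x n with
  | nil => simpa [lbrkAux] using hx
  | cons a t ih =>
    have hdisj : Disjoint S ({a} : Finset (Fin k)) := by
      simp [Finset.disjoint_singleton_right]
      exact ht a (by simp)
    have hy : IsLie ℤ k (S ∪ {a}) (x * wordElem ℤ k [a]
        - ((-1 : ℤ) ^ n) • (wordElem ℤ k [a] * x)) := by
      have := IsLie.bracket (R := ℤ) hdisj hx (IsLie.letter a)
      simpa [hn] using this
    have hcard : (S ∪ {a}).card = n + 1 := by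
      rw [Finset.card_union_of_disjoint hdisj, hn, Finset.card_singleton]
    have := ih _ _ _ hy hcard
      (fun b hb => by
        simp only [Finset.mem_union, Finset.mem_singleton]
        push_neg
        exact ⟨ht b (by simp [hb]), fun hba => (List.nodup_cons.mp htn).1 (hba ▸ hb)⟩)
      (List.nodup_cons.mp htn).2
    have hset : (S ∪ {a}) ∪ t.toFinset = S ∪ (a :: t).toFinset := by
      ext b; simp [List.toFinset_cons]
    rw [lbrkAux]
    rw [hset] at this
    exact this

theorem leftBracket_isLie (l : List (Fin k)) (hl : l.Nodup) (hne : l ≠ []) :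
    IsLie ℤ k l.toFinset (leftBracket ℤ k l) := by
  match l with
  | a :: t =>
    have := isLie_lbrkAux t (wordElem ℤ k [a]) {a} 1 (IsLie.letter a) (by simp)
      (fun b hb => by
        simp only [Finset.mem_singleton]
        exact fun hba => (List.nodup_cons.mp hl).1 (hba ▸ hb))
      (List.nodup_cons.mp hl).2
    have hset : ({a} : Finset (Fin k)) ∪ t.toFinset = (a :: t).toFinset := by
      ext b; simp [List.toFinset_cons]
    rw [hset] at this
    exact this

theorem isLie_nonempty {S : Finset (Fin k)} {x : FA ℤ k} (h : IsLie ℤ k S x) : S.Nonempty := by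
  induction h with
  | letter a => exact ⟨a, by simp⟩
  | bracket hST hp hq ihp ihq => exact ihp.mono Finset.subset_union_left

/-- The span of injective words with letter set `S`. -/
def WS (S : Finset (Fin k)) : Submodule ℤ (FA ℤ k) :=
  Submodule.span ℤ {x | ∃ w : List (Fin k), w.Nodup ∧ w.toFinset = S ∧ x = wordElem ℤ k w}

theorem WS_mul {A B : Finset (Fin k)} (hAB : Disjoint A B) {x y : FA ℤ k}
    (hx : x ∈ WS A) (hy : y ∈ WS B) : x * y ∈ WS (A ∪ B) := by
  have hmem : x * y ∈ WS A * WS B := Submodule.mul_mem_mul hx hy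
  rw [WS, WS, Submodule.span_mul_span] at hmem
  refine Submodule.span_le.mpr ?_ hmem
  rintro z ⟨x', ⟨w, hw, hwA, rfl⟩, y', ⟨v, hv, hvB, rfl⟩, hz⟩
  rw [← hz]
  refine Submodule.subset_span ⟨w ++ v, ?_, ?_, by simpa using wordElem_mul w v⟩
  · rw [List.nodup_append]
    exact ⟨hw, hv, fun a haw b hbv hab => Finset.disjoint_left.mp hAB
      (hwA ▸ List.mem_toFinset.mpr haw) (hvB ▸ List.mem_toFinset.mpr (hab ▸ hbv))⟩
  · rw [List.toFinset_append, hwA, hvB]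

theorem isLie_mem_WS {S : Finset (Fin k)} {x : FA ℤ k} (h : IsLie ℤ k S x) : x ∈ WS S := by
  induction h with
  | letter a => exact Submodule.subset_span ⟨[a], by simp, by simp, rfl⟩
  | @bracket A B p q hAB hp hq ihp ihq =>
    refine sub_mem (WS_mul hAB ihp ihq) (Submodule.smul_mem _ _ ?_)
    rw [Finset.union_comm]
    exact WS_mul hAB.symm ihq ihp

theorem WS_univ_le : WS (Finset.univ : Finset (Fin k)) ≤ wordsLen ℤ k k := by
  refine Submodule.span_le.mpr ?_
  rintro x ⟨w, hw, hwu, rfl⟩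
  refine Submodule.subset_span ⟨w, hw, ?_, rfl⟩
  rw [← List.toFinset_card_of_nodup hw, hwu, Finset.card_univ, Fintype.card_fin]

/-- Left-normed brackets on `S` starting with the letter `s`. -/
def LBSet (s : Fin k) (S : Finset (Fin k)) : Set (FA ℤ k) :=
  {x | ∃ t : List (Fin k), (s :: t).Nodup ∧ (s :: t).toFinset = S ∧ x = leftBracket ℤ k (s :: t)}

theorem list_card {l : List (Fin k)} (hl : l.Nodup) : l.toFinset.card = l.length :=
  List.toFinset_card_of_nodup hl

theorem claim_bracket {B : Finset (Fin k)} {q : FA ℤ k} (hq : IsLie ℤ k B q) :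
    ∀ {A : Finset (Fin k)} {s : Fin k} {p : FA ℤ k}, Disjoint A B → s ∈ A →
      p ∈ Submodule.span ℤ (LBSet s A) →
      p * q - ((-1:ℤ)^(A.card * B.card)) • (q * p) ∈ Submodule.span ℤ (LBSet s (A ∪ B)) := by
  induction hq with
  | letter a =>
    intro A s p hAB hsA hp
    induction hp using Submodule.span_induction with
    | mem x hx =>
      obtain ⟨t, hnd, htA, rfl⟩ := hx
      have haA : a ∉ A := by
        simpa [Finset.disjoint_singleton_right] using hAB
      have hlen : (s :: t).length = A.card := by rw [← htA, list_card hnd]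
      rw [Finset.card_singleton, Nat.mul_one, ← hlen, ← leftBracket_snoc]
      refine Submodule.subset_span ⟨t ++ [a], ?_, ?_, by rw [List.cons_append]⟩
      · have : (s :: t) ++ [a] = s :: (t ++ [a]) := by simp
        rw [← this, List.nodup_append]
        refine ⟨hnd, List.nodup_singleton a, ?_⟩
        intro b hb c hc hbc
        rw [List.mem_singleton] at hc
        subst hc
        exact haA (htA ▸ List.mem_toFinset.mpr (hbc ▸ hb))
      · have : s :: (t ++ [a]) = (s :: t) ++ [a] := by simp
        rw [this, List.toFinset_append, htA]
        simp
    | zero => simp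
    | add x y hx hy ihx ihy =>
      have : (x + y) * wordElem ℤ k [a] - ((-1:ℤ)^(A.card * ({a} : Finset (Fin k)).card)) • (wordElem ℤ k [a] * (x + y))
          = (x * wordElem ℤ k [a] - ((-1:ℤ)^(A.card * ({a} : Finset (Fin k)).card)) • (wordElem ℤ k [a] * x))
            + (y * wordElem ℤ k [a] - ((-1:ℤ)^(A.card * ({a} : Finset (Fin k)).card)) • (wordElem ℤ k [a] * y)) := by
        simp only [add_mul, mul_add, smul_add]
        abel
      rw [this]
      exact add_mem ihx ihy
    | smul c x hx ihx =>
      have : (c • x) * wordElem ℤ k [a] - ((-1:ℤ)^(A.card * ({a} : Finset (Fin k)).card)) • (wordElem ℤ k [a] * (c • x))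
          = c • (x * wordElem ℤ k [a] - ((-1:ℤ)^(A.card * ({a} : Finset (Fin k)).card)) • (wordElem ℤ k [a] * x)) := by
        simp only [smul_sub, smul_mul_assoc, mul_smul_comm, smul_smul, mul_comm]
      rw [this]
      exact Submodule.smul_mem _ _ ihx
  | @bracket U V u v hUV hu hv ihu ihv =>
    intro A s p hAB hsA hp
    have hAU : Disjoint A U := hAB.mono_right Finset.subset_union_left
    have hAV : Disjoint A V := hAB.mono_right Finset.subset_union_right
    have x2 := ihv (A := A ∪ U) (s := s) (p := p * u - ((-1:ℤ)^(A.card * U.card)) • (u * p))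
      (Finset.disjoint_union_left.mpr ⟨hAV, hUV⟩) (Finset.mem_union_left _ hsA)
      (ihu hAU hsA hp)
    have y2 := ihu (A := A ∪ V) (s := s) (p := p * v - ((-1:ℤ)^(A.card * V.card)) • (v * p))
      (Finset.disjoint_union_left.mpr ⟨hAU, hUV.symm⟩) (Finset.mem_union_left _ hsA)
      (ihv hAV hsA hp)
    have hcAU : (A ∪ U).card = A.card + U.card := Finset.card_union_of_disjoint hAU
    have hcAV : (A ∪ V).card = A.card + V.card := Finset.card_union_of_disjoint hAV
    have hcUV : (U ∪ V).card = U.card + V.card := Finset.card_union_of_disjoint hUV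
    rw [hcAU] at x2
    rw [hcAV] at y2
    have hs1 : (A ∪ U) ∪ V = A ∪ (U ∪ V) := Finset.union_assoc A U V
    have hs2 : (A ∪ V) ∪ U = A ∪ (U ∪ V) := by
      rw [Finset.union_assoc, Finset.union_comm V U]
    rw [hs1] at x2
    rw [hs2] at y2
    rw [hcUV, jacobi A.card U.card V.card p u v]
    exact sub_mem x2 (Submodule.smul_mem _ _ y2)

theorem isLie_mem_span_LB {S : Finset (Fin k)} {x : FA ℤ k} (h : IsLie ℤ k S x) :
    ∀ s ∈ S, x ∈ Submodule.span ℤ (LBSet s S) := by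
  induction h with
  | letter a =>
    intro s hs
    rw [Finset.mem_singleton] at hs
    subst hs
    exact Submodule.subset_span ⟨[], by simp, by simp, rfl⟩
  | @bracket A B p q hAB hp hq ihp ihq =>
    intro s hs
    rcases Finset.mem_union.mp hs with hsA | hsB
    · exact claim_bracket hq hAB hsA (ihp s hsA)
    · rw [bracket_flip]
      refine neg_mem (Submodule.smul_mem _ _ ?_)
      have := claim_bracket hp hAB.symm hsB (ihq s hsB)
      rw [Finset.union_comm B A, Nat.mul_comm B.card A.card] at this
      exact this

theorem isLie_mem_span_Reut {S : Finset (Fin k)} {x : FA ℤ k} (h : IsLie ℤ k S x) :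
    x ∈ Submodule.span ℤ (ReutSet ℤ k S) := by
  have hS : S.Nonempty := isLie_nonempty h
  refine Submodule.span_mono ?_ (isLie_mem_span_LB h (S.min' hS) (S.min'_mem hS))
  rintro y ⟨t, hnd, htS, rfl⟩
  exact ⟨S.min' hS :: t, hnd, htS, ⟨S.min' hS, t, rfl, fun a ha => S.min'_le a ha⟩, rfl⟩

theorem reut_isLie {S : Finset (Fin k)} {x : FA ℤ k} (hx : x ∈ ReutSet ℤ k S) :
    IsLie ℤ k S x := by
  obtain ⟨l, hnd, htS, ⟨s, t, rfl, -⟩, rfl⟩ := hx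
  exact htS ▸ leftBracket_isLie _ hnd (by simp)

/-- Product of the Reutenauer elements along a list of basis indices. -/
def prodL (L : List (BIdx ℤ k)) : FA ℤ k := (L.map (fun b => b.val.2)).prod

/-- Pairwise disjointness of the blocks. -/
def PD (L : List (BIdx ℤ k)) : Prop := L.Pairwise (fun b c => Disjoint b.val.1 c.val.1)

/-- Covering of all of `Fin k` by the blocks. -/
def CV (L : List (BIdx ℤ k)) : Prop := ∀ a : Fin k, ∃ b ∈ L, a ∈ b.val.1

/-- The union of the blocks. -/
def unionL (L : List (BIdx ℤ k)) : Finset (Fin k) :=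
  (L.map (fun b => b.val.1)).foldr (· ∪ ·) ∅

theorem mem_unionL {L : List (BIdx ℤ k)} {a : Fin k} :
    a ∈ unionL L ↔ ∃ b ∈ L, a ∈ b.val.1 := by
  induction L with
  | nil => simp [unionL]
  | cons b t ih => simp [unionL, List.foldr] at ih ⊢; rw [ih]

theorem prodL_mem_WS {L : List (BIdx ℤ k)} (hPD : PD L) : prodL L ∈ WS (unionL L) := by
  induction L with
  | nil => exact Submodule.subset_span ⟨[], by simp, by simp [unionL], rfl⟩
  | cons b t ih =>
    have hb : b.val.2 ∈ WS b.val.1 := isLie_mem_WS (reut_isLie b.property.2)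
    have hdisj : Disjoint b.val.1 (unionL t) := by
      rw [Finset.disjoint_right]
      intro a ha hab
      obtain ⟨c, hc, hac⟩ := mem_unionL.mp ha
      exact Finset.disjoint_left.mp ((List.pairwise_cons.mp hPD).1 c hc) hab hac
    have := WS_mul hdisj hb (ih (List.pairwise_cons.mp hPD).2)
    have hu : unionL (b :: t) = b.val.1 ∪ unionL t := rfl
    rw [prodL, List.map_cons, List.prod_cons, hu]
    exact this

/-- number of elements of `L` that are out of order with respect to `b`. -/
noncomputable def inv1 (r : BIdx ℤ k → BIdx ℤ k → Prop) (b : BIdx ℤ k)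
    (L : List (BIdx ℤ k)) : ℕ :=
  L.countP (fun y => @decide (¬ r b y) (Classical.propDecidable _))

/-- number of inversions of `L`. -/
noncomputable def invs (r : BIdx ℤ k → BIdx ℤ k → Prop) : List (BIdx ℤ k) → ℕ
  | [] => 0
  | b :: t => inv1 r b t + invs r t

theorem inv1_perm (r : BIdx ℤ k → BIdx ℤ k → Prop) (b : BIdx ℤ k)
    {L L' : List (BIdx ℤ k)} (h : L.Perm L') : inv1 r b L = inv1 r b L' :=
  h.countP_eq _

theorem invs_append (r : BIdx ℤ k → BIdx ℤ k → Prop) (A C : List (BIdx ℤ k)) :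
    invs r (A ++ C) = invs r A + (A.map (fun a => inv1 r a C)).sum + invs r C := by
  induction A with
  | nil => simp [invs]
  | cons a A ih =>
    simp only [List.cons_append, invs, ih, List.map_cons, List.sum_cons, List.append_eq]
    have : inv1 r a (A ++ C) = inv1 r a A + inv1 r a C := by
      simp [inv1, List.countP_append]
    omega

theorem invs_swap (r : BIdx ℤ k → BIdx ℤ k → Prop) (A C : List (BIdx ℤ k))
    (x y : BIdx ℤ k) (hxy : ¬ r x y) (hyx : r y x) :
    invs r (A ++ y :: x :: C) < invs r (A ++ x :: y :: C) := by
  rw [invs_append, invs_append]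
  have hmap : ∀ a, inv1 r a (y :: x :: C) = inv1 r a (x :: y :: C) := fun a =>
    inv1_perm r a (List.Perm.swap _ _ _)
  simp only [hmap]
  have h1 : invs r (x :: y :: C) = inv1 r x (y :: C) + (inv1 r y C + invs r C) := rfl
  have h2 : invs r (y :: x :: C) = inv1 r y (x :: C) + (inv1 r x C + invs r C) := rfl
  have h3 : inv1 r x (y :: C) = 1 + inv1 r x C := by
    simp [inv1, List.countP_cons, hxy] <;> omega
  have h4 : inv1 r y (x :: C) = inv1 r y C := by
    simp [inv1, List.countP_cons, hyx]
  omega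

theorem not_chain'_decomp {α : Type} (r : α → α → Prop) :
    ∀ L : List α, ¬ List.Chain' r L → ∃ A x y C, L = A ++ x :: y :: C ∧ ¬ r x y
  | [], h => absurd List.isChain_nil h
  | [x], h => absurd (List.isChain_singleton x) h
  | x :: y :: t, h => by
    rw [show List.Chain' r (x :: y :: t) ↔ _ from List.isChain_cons_cons] at h
    push_neg at h
    by_cases hxy : r x y
    · obtain ⟨A, x', y', C, hEq, hr⟩ := not_chain'_decomp r (y :: t) (h hxy)
      exact ⟨x :: A, x', y', C, by rw [hEq]; rfl, hr⟩
    · exact ⟨[], x, y, t, rfl, hxy⟩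

theorem mul_span_mul {G : Set (FA ℤ k)} {x : FA ℤ k} (hx : x ∈ Submodule.span ℤ G)
    (A C : FA ℤ k) :
    A * x * C ∈ Submodule.span ℤ ((fun g => A * g * C) '' G) := by
  induction hx using Submodule.span_induction with
  | mem g hg => exact Submodule.subset_span ⟨g, hg, rfl⟩
  | zero => simp
  | add a b ha hb iha ihb =>
    have : A * (a + b) * C = A * a * C + A * b * C := by noncomm_ring
    rw [this]; exact add_mem iha ihb
  | smul c a ha iha =>
    have : A * (c • a) * C = c • (A * a * C) := by
      rw [mul_smul_comm, smul_mul_assoc]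
    rw [this]; exact Submodule.smul_mem _ _ iha

theorem sorted_mem_PiSet (r : BIdx ℤ k → BIdx ℤ k → Prop)
    {L : List (BIdx ℤ k)} (hPD : PD L) (hCV : CV L) (hsort : L.Pairwise r) :
    prodL L ∈ PiSet ℤ k r := by
  refine ⟨L.length, fun i => (L.get i).val.1, fun i => (L.get i).val.2,
    fun i => (L.get i).property, ?_, ?_, ?_, ?_⟩
  · intro i j hij
    rcases Nat.lt_or_ge (i : ℕ) (j : ℕ) with h | h
    · exact List.pairwise_iff_get.mp hPD i j (by omega)
    · have : (j : ℕ) < (i : ℕ) := by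
        rcases Nat.lt_or_ge (j : ℕ) (i : ℕ) with h' | h'
        · exact h'
        · exact (hij (Fin.ext (Nat.le_antisymm h' h))).elim
      exact (List.pairwise_iff_get.mp hPD j i (by omega)).symm
  · apply Finset.eq_univ_of_forall
    intro a
    obtain ⟨b, hb, hab⟩ := hCV a
    obtain ⟨i, hi⟩ := List.mem_iff_get.mp hb
    exact Finset.mem_biUnion.mpr ⟨i, Finset.mem_univ i, by rw [hi]; exact hab⟩
  · intro i j hij
    have hbi : (⟨((L.get i).val.1, (L.get i).val.2), (L.get i).property⟩ : BIdx ℤ k)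
        = L.get i := Subtype.ext (by exact Prod.mk.eta)
    have hbj : (⟨((L.get j).val.1, (L.get j).val.2), (L.get j).property⟩ : BIdx ℤ k)
        = L.get j := Subtype.ext (by exact Prod.mk.eta)
    constructor
    · rw [hbi, hbj]
      exact List.pairwise_iff_get.mp hsort i j hij
    · intro hEq
      have h1 : (L.get i).val.1 = (L.get j).val.1 := congrArg Prod.fst hEq
      have hdisj := List.pairwise_iff_get.mp hPD i j hij
      rw [h1] at hdisj
      exact (L.get j).property.1.ne_empty (disjoint_self.mp hdisj)
  · have h1 : (fun i => (L.get i).val.2) = (fun b : BIdx ℤ k => b.val.2) ∘ L.get := rfl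
    rw [prodL, h1, ← List.map_ofFn, List.ofFn_get]

theorem prod_mem_span_PiSet (r : BIdx ℤ k → BIdx ℤ k → Prop)
    (hr : IsLinearOrder (BIdx ℤ k) r) :
    ∀ (L : List (BIdx ℤ k)), PD L → CV L → prodL L ∈ Submodule.span ℤ (PiSet ℤ k r) := by
  haveI := hr
  have main : ∀ n m (L : List (BIdx ℤ k)), L.length = n → invs r L = m →
      PD L → CV L → prodL L ∈ Submodule.span ℤ (PiSet ℤ k r) := by
    intro n
    induction n using Nat.strong_induction_on with
    | _ n ihn =>
    intro m
    induction m using Nat.strong_induction_on with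
    | _ m ihm =>
    intro L hlen hinv hPD hCV
    by_cases hs : L.Pairwise r
    · exact Submodule.subset_span (sorted_mem_PiSet r hPD hCV hs)
    · have hnc : ¬ List.Chain' r L := fun hc => hs (List.isChain_iff_pairwise.mp hc)
      obtain ⟨A, x, y, C, rfl, hxy⟩ := not_chain'_decomp r L hnc
      have hyx : r y x := (total_of r y x).resolve_right hxy
      -- the two blocks are disjoint
      have hPDxy : Disjoint x.val.1 y.val.1 := by
        have := (List.pairwise_append.mp hPD).2.1
        exact (List.pairwise_cons.mp this).1 y (by simp)
      -- decompose the product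
      have hsplit : ∀ z1 z2 : FA ℤ k, (A.map (fun b => b.val.2)).prod * (z1 * (z2 *
          (C.map (fun b => b.val.2)).prod)) =
          ((A.map (fun b => b.val.2)).prod * (z1 * z2) * (C.map (fun b => b.val.2)).prod) := by
        intro z1 z2; noncomm_ring
      have hprod : prodL (A ++ x :: y :: C) =
          (A.map (fun b => b.val.2)).prod * (x.val.2 * y.val.2) * (C.map (fun b => b.val.2)).prod := by
        rw [prodL, List.map_append, List.prod_append, List.map_cons, List.prod_cons,
          List.map_cons, List.prod_cons, hsplit]
      have hswapprod : prodL (A ++ y :: x :: C) =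
          (A.map (fun b => b.val.2)).prod * (y.val.2 * x.val.2) * (C.map (fun b => b.val.2)).prod := by
        rw [prodL, List.map_append, List.prod_append, List.map_cons, List.prod_cons,
          List.map_cons, List.prod_cons, hsplit]
      set e : ℕ := x.val.1.card * y.val.1.card
      have hkey : prodL (A ++ x :: y :: C) = ((-1:ℤ)^e) • prodL (A ++ y :: x :: C)
          + (A.map (fun b => b.val.2)).prod *
            (x.val.2 * y.val.2 - ((-1:ℤ)^e) • (y.val.2 * x.val.2)) *
            (C.map (fun b => b.val.2)).prod := by
        rw [hprod, hswapprod]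
        simp only [mul_sub, sub_mul, smul_mul_assoc, mul_smul_comm]
        abel
      rw [hkey]
      refine add_mem (Submodule.smul_mem _ _ ?_) ?_
      · -- swapped term: same length, fewer inversions
        refine ihm (invs r (A ++ y :: x :: C)) ?_ _ ?_ rfl ?_ ?_
        · rw [← hinv]; exact invs_swap r A C x y hxy hyx
        · rw [← hlen]; simp
        · -- PD of swapped list
          rw [PD] at hPD ⊢
          refine (List.Perm.pairwise_iff (by intro a b h; exact h.symm) ?_).mp hPD
          exact List.Perm.append_left A (List.Perm.swap _ _ _)
        · -- CV of swapped list
          intro a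
          obtain ⟨b, hb, hab⟩ := hCV a
          refine ⟨b, ?_, hab⟩
          have : (A ++ x :: y :: C).Perm (A ++ y :: x :: C) :=
            List.Perm.append_left A (List.Perm.swap _ _ _)
          exact this.mem_iff.mp hb
      · -- commutator term: merged block, shorter list
        have hbr : x.val.2 * y.val.2 - ((-1:ℤ)^e) • (y.val.2 * x.val.2)
            ∈ Submodule.span ℤ (ReutSet ℤ k (x.val.1 ∪ y.val.1)) :=
          isLie_mem_span_Reut
            (IsLie.bracket hPDxy (reut_isLie x.property.2) (reut_isLie y.property.2))
        have hmul := mul_span_mul hbr (A.map (fun b => b.val.2)).prod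
          (C.map (fun b => b.val.2)).prod
        refine Submodule.span_le.mpr ?_ hmul
        rintro w ⟨g, hg, rfl⟩
        -- build the merged list
        have hgU : (x.val.1 ∪ y.val.1).Nonempty := x.property.1.mono Finset.subset_union_left
        set z : BIdx ℤ k := ⟨(x.val.1 ∪ y.val.1, g), hgU, hg⟩ with hz
        have hzP : PD (A ++ z :: C) := by
          rw [PD, List.pairwise_append] at hPD ⊢
          obtain ⟨hA, hxyC, hcross⟩ := hPD
          refine ⟨hA, ?_, ?_⟩
          · rw [List.pairwise_cons]
            have h1 := List.pairwise_cons.mp hxyC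
            have h2 := List.pairwise_cons.mp h1.2
            refine ⟨fun c hc => ?_, h2.2⟩
            rw [hz]
            exact Finset.disjoint_union_left.mpr
              ⟨h1.1 c (by simp [hc]), h2.1 c hc⟩
          · intro a ha c hc
            rcases List.mem_cons.mp hc with rfl | hcC
            · rw [hz]
              exact Finset.disjoint_union_right.mpr
                ⟨hcross a ha x (by simp), hcross a ha y (by simp)⟩
            · exact hcross a ha c (by simp [hcC])
        have hzC : CV (A ++ z :: C) := by
          intro a
          obtain ⟨b, hb, hab⟩ := hCV a
          rcases List.mem_append.mp hb with hbA | hbxyC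
          · exact ⟨b, List.mem_append_left _ hbA, hab⟩
          · rcases List.mem_cons.mp hbxyC with rfl | hb2
            · exact ⟨z, List.mem_append_right _ (by simp), by
                rw [hz]; exact Finset.mem_union_left _ hab⟩
            · rcases List.mem_cons.mp hb2 with rfl | hb3
              · exact ⟨z, List.mem_append_right _ (by simp), by
                  rw [hz]; exact Finset.mem_union_right _ hab⟩
              · exact ⟨b, List.mem_append_right _ (by simp [hb3]), hab⟩
        have hlen' : (A ++ z :: C).length < n := by
          rw [← hlen]; simp only [List.length_append, List.length_cons]; omega
        have := ihn (A ++ z :: C).length hlen' (invs r (A ++ z :: C)) _ rfl rfl hzP hzC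
        have hpz : prodL (A ++ z :: C) =
            (A.map (fun b => b.val.2)).prod * g * (C.map (fun b => b.val.2)).prod := by
          rw [prodL, List.map_append, List.prod_append, List.map_cons, List.prod_cons]
          have : z.val.2 = g := rfl
          rw [this, ← mul_assoc]
        rw [hpz] at this
        exact this
  intro L hPD hCV
  exact main L.length (invs r L) L rfl rfl hPD hCV

/-- The singleton basis element for a letter. -/
def letterB (a : Fin k) : BIdx ℤ k :=
  ⟨({a}, wordElem ℤ k [a]), Finset.singleton_nonempty a,
    ⟨[a], List.nodup_singleton a, by simp, ⟨a, [], rfl, by simp⟩, rfl⟩⟩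

theorem prod_letters (w : List (Fin k)) :
    (w.map (fun a => wordElem ℤ k [a])).prod = wordElem ℤ k w := by
  induction w with
  | nil => rfl
  | cons a t ih => rw [List.map_cons, List.prod_cons, ih, wordElem_mul]; rfl

theorem nodup_toFinset_univ {w : List (Fin k)} (hw : w.Nodup) (hlen : w.length = k) :
    w.toFinset = (Finset.univ : Finset (Fin k)) :=
  Finset.eq_univ_of_card _ (by rw [list_card hw, hlen, Fintype.card_fin])

theorem wordsLen_le_span_PiSet (r : BIdx ℤ k → BIdx ℤ k → Prop)
    (hr : IsLinearOrder (BIdx ℤ k) r) :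
    wordsLen ℤ k k ≤ Submodule.span ℤ (PiSet ℤ k r) := by
  refine Submodule.span_le.mpr ?_
  rintro x ⟨w, hw, hlen, rfl⟩
  have hPD : PD (w.map letterB) := by
    rw [PD, List.pairwise_map]
    refine hw.imp ?_
    intro a b hab
    exact Finset.disjoint_singleton.mpr hab
  have hCV : CV (w.map letterB) := by
    intro a
    have haw : a ∈ w := by
      rw [← List.mem_toFinset, nodup_toFinset_univ hw hlen]
      exact Finset.mem_univ a
    exact ⟨letterB a, List.mem_map.mpr ⟨a, haw, rfl⟩, by simp [letterB]⟩
  have hprod : prodL (w.map letterB) = wordElem ℤ k w := by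
    rw [prodL, List.map_map]
    exact prod_letters w
  rw [← hprod]
  exact prod_mem_span_PiSet r hr _ hPD hCV

theorem PiSet_subset_wordsLen (r : BIdx ℤ k → BIdx ℤ k → Prop) :
    PiSet ℤ k r ⊆ (wordsLen ℤ k k : Set (FA ℤ k)) := by
  rintro x ⟨m, S, P, h, hdisj, hcover, hasc, rfl⟩
  set L : List (BIdx ℤ k) := List.ofFn (fun i => ⟨(S i, P i), h i⟩) with hL
  have hPD : PD L := by
    rw [PD, hL]; apply List.pairwise_ofFn.mpr
    intro i j hij
    exact hdisj i j (Fin.ne_of_lt hij)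
  have hprodL : prodL L = (List.ofFn P).prod := by
    rw [prodL, hL]
    have h1 : (fun b : BIdx ℤ k => b.val.2) ∘ (fun i => (⟨(S i, P i), h i⟩ : BIdx ℤ k)) = P := rfl
    exact congrArg List.prod (List.map_ofFn.trans (congrArg List.ofFn h1))
  have hunion : unionL L = Finset.univ := by
    apply Finset.eq_univ_of_forall
    intro a
    have : a ∈ Finset.univ.biUnion S := by rw [hcover]; exact Finset.mem_univ a
    obtain ⟨i, -, hai⟩ := Finset.mem_biUnion.mp this
    exact mem_unionL.mpr ⟨⟨(S i, P i), h i⟩, by rw [hL]; exact List.mem_ofFn.mpr ⟨i, rfl⟩, hai⟩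
  have := prodL_mem_WS hPD
  rw [hunion, hprodL] at this
  exact WS_univ_le this

theorem perm_of_map_perm {α β : Type} (f : α → β) (hf : Function.Injective f)
    {l1 l2 : List α} (h : (l1.map f).Perm (l2.map f)) : l1.Perm l2 := by
  classical
  rw [List.perm_iff_count]
  intro a
  have h2 := h.count_eq (f a)
  rwa [List.count_map_of_injective _ f hf, List.count_map_of_injective _ f hf] at h2

/-- Foata decomposition: cut an (injective) word into min-first segments. -/
def decomp : List (Fin k) → List (List (Fin k))
  | [] => []
  | a :: t => (a :: t.takeWhile (fun b => decide (a < b)))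
      :: decomp (t.dropWhile (fun b => decide (a < b)))
  termination_by l => l.length
  decreasing_by
    simp only [List.length_cons]
    exact Nat.lt_succ_of_le (List.Sublist.length_le (List.dropWhile_sublist _))

theorem decomp_flatten_eq (w : List (Fin k)) : (decomp w).flatten = w := by
  induction w using decomp.induct with
  | case1 => simp [decomp]
  | case2 a t ih =>
    rw [decomp, List.flatten_cons, ih, List.cons_append, List.takeWhile_append_dropWhile]

theorem decomp_seg_ne_nil {w : List (Fin k)} {s : List (Fin k)} (hs : s ∈ decomp w) :
    s ≠ [] := by
  induction w using decomp.induct with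
  | case1 => simp [decomp] at hs
  | case2 a t ih =>
    rw [decomp, List.mem_cons] at hs
    rcases hs with rfl | hs
    · simp
    · exact ih hs

theorem decomp_seg_tail [Inhabited (Fin k)] {w : List (Fin k)} {s : List (Fin k)}
    (hs : s ∈ decomp w) : ∀ b ∈ s.tail, s.head! < b := by
  induction w using decomp.induct with
  | case1 => simp [decomp] at hs
  | case2 a t ih =>
    rw [decomp, List.mem_cons] at hs
    rcases hs with rfl | hs
    · intro b hb
      simp only [List.head!_cons, List.tail_cons] at hb ⊢
      have := List.mem_takeWhile_imp hb
      exact of_decide_eq_true this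
    · exact ih hs

theorem takeWhile_append_all {α : Type} (p : α → Bool) (l₁ l₂ : List α)
    (h : ∀ a ∈ l₁, p a = true) :
    (l₁ ++ l₂).takeWhile p = l₁ ++ l₂.takeWhile p
      ∧ (l₁ ++ l₂).dropWhile p = l₂.dropWhile p := by
  induction l₁ with
  | nil => simp
  | cons a l ih =>
    have ha : p a = true := h a (by simp)
    have := ih (fun b hb => h b (by simp [hb]))
    simp [List.takeWhile_cons, List.dropWhile_cons, ha, this.1, this.2]

theorem decomp_flatten [Inhabited (Fin k)] (segs : List (List (Fin k)))
    (h1 : ∀ s ∈ segs, s ≠ [])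
    (h2 : ∀ s ∈ segs, ∀ b ∈ s.tail, s.head! < b)
    (h3 : segs.Chain' (fun s s' => s'.head! < s.head!)) :
    decomp segs.flatten = segs := by
  induction segs with
  | nil => simp [decomp]
  | cons s rest ih =>
    obtain ⟨a, t, rfl⟩ : ∃ a t, s = a :: t := by
      rcases s with - | ⟨a, t⟩
      · exact absurd rfl (h1 _ (by simp))
      · exact ⟨a, t, rfl⟩
    have htall : ∀ b ∈ t, (fun b => decide (a < b)) b = true := by
      intro b hb
      have := h2 (a :: t) List.mem_cons_self b (by simpa using hb)
      exact decide_eq_true (by simpa using this)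
    have hheadfalse : rest.flatten.takeWhile (fun b => decide (a < b)) = []
        ∧ rest.flatten.dropWhile (fun b => decide (a < b)) = rest.flatten := by
      rcases hrest : rest with - | ⟨s', rest'⟩
      · simp
      · obtain ⟨a', t', rfl⟩ : ∃ a' t', s' = a' :: t' := by
          rcases s' with - | ⟨a', t'⟩
          · exact absurd rfl (h1 _ (by simp [hrest]))
          · exact ⟨a', t', rfl⟩
        have hlt : a' < a := by
          have := List.isChain_cons_cons.mp (hrest ▸ h3)
          simpa using this.1
        have : (fun b => decide (a < b)) a' = false := by
          simp only [decide_eq_false_iff_not]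
          exact fun h => absurd (lt_trans hlt h) (lt_irrefl a')
        simp [List.flatten_cons, List.takeWhile_cons, List.dropWhile_cons, this]
    rw [List.flatten_cons, List.cons_append, decomp]
    have hsplit := takeWhile_append_all (fun b => decide (a < b)) t rest.flatten htall
    rw [hsplit.1, hsplit.2, hheadfalse.1, hheadfalse.2, List.append_nil]
    congr 1
    exact ih (fun s hs => h1 s (by simp [hs])) (fun s hs => h2 s (by simp [hs]))
      (h3.tail)

/-- The index type of injective words of full length. -/
def WI (k : ℕ) : Type := {w : List (Fin k) // w.Nodup ∧ w.length = k}

theorem segB_aux [Inhabited (Fin k)] (w : WI k) (s : List (Fin k)) (hs : s ∈ decomp w.val) :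
    s.toFinset.Nonempty ∧ leftBracket ℤ k s ∈ ReutSet ℤ k s.toFinset := by
  have hne : s ≠ [] := decomp_seg_ne_nil hs
  have hnd : s.Nodup := by
    have hsub : s.Sublist (decomp w.val).flatten := List.sublist_flatten_of_mem hs
    rw [decomp_flatten_eq] at hsub
    exact hsub.nodup w.property.1
  have hmin : ∀ a ∈ s.toFinset, s.head! ≤ a := by
    intro a ha
    rw [List.mem_toFinset] at ha
    rw [← List.cons_head!_tail hne, List.mem_cons] at ha
    rcases ha with rfl | ha
    · exact le_refl _
    · exact le_of_lt (decomp_seg_tail hs a ha)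
  constructor
  · obtain ⟨a, t, rfl⟩ : ∃ a t, s = a :: t := by
      rcases s with - | ⟨a, t⟩
      · exact absurd rfl hne
      · exact ⟨a, t, rfl⟩
    exact ⟨a, by simp⟩
  · exact ⟨s, hnd, rfl, ⟨s.head!, s.tail, (List.cons_head!_tail hne).symm, hmin⟩, rfl⟩

/-- The segment list of a word, as Reutenauer basis indices. -/
noncomputable def segB [Inhabited (Fin k)] (w : WI k) : List (BIdx ℤ k) :=
  (decomp w.val).attach.map
    (fun s => ⟨(s.val.toFinset, leftBracket ℤ k s.val), segB_aux w s.val s.property⟩)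

/-- The canonical product associated to an injective word. -/
noncomputable def phi [Inhabited (Fin k)] (r : BIdx ℤ k → BIdx ℤ k → Prop) (w : WI k) :
    FA ℤ k :=
  prodL (@List.insertionSort _ r (fun a b => Classical.propDecidable _) (segB w))

theorem PiSet_subset_range_phi [Inhabited (Fin k)] (r : BIdx ℤ k → BIdx ℤ k → Prop)
    (hr : IsLinearOrder (BIdx ℤ k) r) :
    PiSet ℤ k r ⊆ Set.range (phi r) := by
  haveI := hr
  rintro x ⟨m, S, P, h, hdisj, hcover, hasc, rfl⟩
  have hchoice : ∀ i, ∃ l : List (Fin k), l.Nodup ∧ l.toFinset = S i ∧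
      (∃ s t, l = s :: t ∧ ∀ a ∈ S i, s ≤ a) ∧ P i = leftBracket ℤ k l := fun i => (h i).2
  choose li hnd htS hmin hP using hchoice
  have hne : ∀ i, li i ≠ [] := by
    intro i
    obtain ⟨s, t, heq, -⟩ := hmin i
    simp [heq]
  have hhead_mem : ∀ i, (li i).head! ∈ S i := by
    intro i
    obtain ⟨s, t, heq, -⟩ := hmin i
    rw [← htS i, heq]
    simp
  have hheadmin : ∀ i, ∀ a ∈ S i, (li i).head! ≤ a := by
    intro i a ha
    obtain ⟨s, t, heq, hm⟩ := hmin i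
    rw [heq]
    simpa using hm a ha
  have htail : ∀ i, ∀ b ∈ (li i).tail, (li i).head! < b := by
    intro i b hb
    have hbmem : b ∈ li i := by
      conv => rw [← List.cons_head!_tail (hne i)]
      exact List.mem_cons_of_mem _ hb
    have hble : (li i).head! ≤ b := hheadmin i b (by rw [← htS i]; exact List.mem_toFinset.mpr hbmem)
    refine lt_of_le_of_ne hble ?_
    intro hEq
    have : (li i).head! ∉ (li i).tail := by
      have := (hne i) ; have hh := List.cons_head!_tail (hne i)
      have hnodup : ((li i).head! :: (li i).tail).Nodup := by rw [hh]; exact hnd i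
      exact (List.nodup_cons.mp hnodup).1
    exact this (hEq ▸ hb)
  -- sort the segments by decreasing heads
  haveI : IsTotal (List (Fin k)) (fun s s' => s'.head! ≤ s.head!) :=
    ⟨fun a b => (le_total b.head! a.head!).imp id id⟩
  haveI : IsTrans (List (Fin k)) (fun s s' => s'.head! ≤ s.head!) :=
    ⟨fun a b c h1 h2 => le_trans h2 h1⟩
  set segs := List.insertionSort (fun s s' => s'.head! ≤ s.head!) (List.ofFn li) with hsegs
  have hperm : segs.Perm (List.ofFn li) := List.perm_insertionSort _ _
  have hsorted : segs.Pairwise (fun s s' => s'.head! ≤ s.head!) :=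
    List.pairwise_insertionSort _ _
  have hmemsegs : ∀ s ∈ segs, ∃ i, s = li i := by
    intro s hs
    have := hperm.mem_iff.mp hs
    obtain ⟨i, hi⟩ := List.mem_ofFn.mp this
    exact ⟨i, hi.symm⟩
  have hheads_ne : ∀ i j, i ≠ j → (li i).head! ≠ (li j).head! := by
    intro i j hij hEq
    exact Finset.disjoint_left.mp (hdisj i j hij) (hhead_mem i) (hEq ▸ hhead_mem j)
  have hli_inj : Function.Injective li := by
    intro i j hEq
    by_contra hij
    exact hheads_ne i j hij (by rw [hEq])
  have hchain : segs.Chain' (fun s s' => s'.head! < s.head!) := by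
    apply List.Pairwise.isChain
    have h2 : segs.Pairwise (fun s s' => s.head! ≠ s'.head!) := by
      refine (List.Perm.pairwise_iff (by intro a b hab; exact hab.symm) hperm).mpr ?_
      rw [List.pairwise_ofFn]
      intro i j hij
      exact hheads_ne i j (Fin.ne_of_lt hij)
    exact (hsorted.and h2).imp (fun hab => lt_of_le_of_ne hab.1 (Ne.symm hab.2))
  set w0 := segs.flatten with hw0
  have hw0nd : w0.Nodup := by
    rw [hw0, List.nodup_flatten]
    constructor
    · intro s hs
      obtain ⟨i, rfl⟩ := hmemsegs s hs
      exact hnd i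
    · refine (List.Perm.pairwise_iff (by intro a b hab; exact hab.symm) hperm).mpr ?_
      rw [List.pairwise_ofFn]
      intro i j hij a hai haj
      have h1 : a ∈ S i := by rw [← htS i]; exact List.mem_toFinset.mpr hai
      have h2 : a ∈ S j := by rw [← htS j]; exact List.mem_toFinset.mpr haj
      exact Finset.disjoint_left.mp (hdisj i j (Fin.ne_of_lt hij)) h1 h2
  have hw0univ : w0.toFinset = (Finset.univ : Finset (Fin k)) := by
    apply Finset.eq_univ_of_forall
    intro a
    have : a ∈ Finset.univ.biUnion S := by rw [hcover]; exact Finset.mem_univ a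
    obtain ⟨i, -, hai⟩ := Finset.mem_biUnion.mp this
    rw [List.mem_toFinset, hw0, List.mem_flatten]
    refine ⟨li i, hperm.mem_iff.mpr (List.mem_ofFn.mpr ⟨i, rfl⟩), ?_⟩
    rw [← List.mem_toFinset, htS i]
    exact hai
  have hw0len : w0.length = k := by
    rw [← list_card hw0nd, hw0univ, Finset.card_univ, Fintype.card_fin]
  set wel : WI k := ⟨w0, hw0nd, hw0len⟩ with hwel
  refine ⟨wel, ?_⟩
  have hdecomp : decomp w0 = segs := by
    refine decomp_flatten segs ?_ ?_ hchain
    · intro s hs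
      obtain ⟨i, rfl⟩ := hmemsegs s hs
      exact hne i
    · intro s hs
      obtain ⟨i, rfl⟩ := hmemsegs s hs
      exact htail i
  set bs : List (BIdx ℤ k) := List.ofFn (fun i => ⟨(S i, P i), h i⟩) with hbs
  have hvals : (segB wel).map Subtype.val
      = (decomp wel.val).map (fun s => (s.toFinset, leftBracket ℤ k s)) := by
    rw [segB]
    exact List.map_map.trans (List.attach_map_val (f := fun s => (s.toFinset, leftBracket ℤ k s)))
  have hpermb : (segB wel).Perm bs := by
    apply perm_of_map_perm Subtype.val Subtype.val_injective
    rw [hvals]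
    have hwv : wel.val = w0 := rfl
    rw [hwv, hdecomp]
    have h2 : bs.map Subtype.val = List.ofFn (fun i => (S i, P i)) := by
      rw [hbs]
      exact List.map_ofFn
    rw [h2]
    have h3 : (List.ofFn li).map (fun s => (s.toFinset, leftBracket ℤ k s))
        = List.ofFn (fun i => (S i, P i)) := by
      rw [List.map_ofFn]
      congr 1
      funext i
      simp only [Function.comp]
      rw [htS i, ← hP i]
    rw [← h3]
    exact hperm.map _
  have hsortb : (@List.insertionSort _ r (fun a b => Classical.propDecidable _) (segB wel)).Pairwise r :=
    @List.pairwise_insertionSort _ r (fun a b => Classical.propDecidable _) _ _ _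
  have hbs_sorted : bs.Pairwise r := by
    rw [hbs]; apply List.pairwise_ofFn.mpr
    intro i j hij
    exact (hasc i j hij).1
  have heq : @List.insertionSort _ r (fun a b => Classical.propDecidable _) (segB wel) = bs :=
    List.Perm.eq_of_pairwise (fun a b _ _ h1 h2 => antisymm h1 h2) hsortb hbs_sorted
      ((@List.perm_insertionSort _ r (fun a b => Classical.propDecidable _) _).trans hpermb)
  show phi r wel = (List.ofFn P).prod
  rw [phi, heq, hbs, prodL]
  have h1 : (fun b : BIdx ℤ k => b.val.2) ∘ (fun i => (⟨(S i, P i), h i⟩ : BIdx ℤ k)) = P := rfl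
  exact congrArg List.prod (List.map_ofFn.trans (congrArg List.ofFn h1))

theorem WI_val_injective : Function.Injective (fun w : WI k => w.val) :=
  fun _ _ h => Subtype.ext h

theorem WI_finite : Finite (WI k) := by
  have hinj : Function.Injective
      (fun w : WI k => (fun i : Fin k => w.val.get (Fin.cast w.property.2.symm i))) := by
    intro w v h
    apply Subtype.ext
    apply List.ext_get (by rw [w.property.2, v.property.2])
    intro n h1 h2
    have hn : n < k := by rw [← w.property.2]; exact h1
    have := congrFun h ⟨n, hn⟩
    simpa using this
  exact Finite.of_injective _ hinj

theorem wordsLen_eq_span_range :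
    wordsLen ℤ k k
      = Submodule.span ℤ (Set.range (fun w : WI k => wordElem ℤ k w.val)) := by
  rw [wordsLen]
  congr 1
  ext x
  constructor
  · rintro ⟨w, hnd, hlen, rfl⟩
    exact ⟨⟨w, hnd, hlen⟩, rfl⟩
  · rintro ⟨w, rfl⟩
    exact ⟨w.val, w.property.1, w.property.2, rfl⟩

/-- The basis of `wordsLen` given by the injective words themselves. -/
noncomputable def wordsBasis (k : ℕ) : Module.Basis (WI k) ℤ ↥(wordsLen ℤ k k) :=
  (Module.Basis.span (wordElem_linearIndependent (fun w : WI k => w.val) WI_val_injective)).map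
    (LinearEquiv.ofEq _ _ wordsLen_eq_span_range.symm)

theorem main_theorem (k : ℕ) (hk : 2 ≤ k) (r : BIdx ℤ k → BIdx ℤ k → Prop)
    (hr : IsLinearOrder (BIdx ℤ k) r) :
    ∃ b : Module.Basis ↥(PiSet ℤ k r) ℤ ↥(wordsLen ℤ k k),
      ∀ p : ↥(PiSet ℤ k r), (b p).val = p.val := by
  haveI : Inhabited (Fin k) := ⟨⟨0, by omega⟩⟩
  haveI := hr
  haveI := WI_finite (k := k)
  haveI : Fintype (WI k) := Fintype.ofFinite _
  -- the subset relation and the span equality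
  have hsub : PiSet ℤ k r ⊆ (wordsLen ℤ k k : Set (FA ℤ k)) := PiSet_subset_wordsLen r
  have hspan : Submodule.span ℤ (PiSet ℤ k r) = wordsLen ℤ k k :=
    le_antisymm (Submodule.span_le.mpr hsub) (wordsLen_le_span_PiSet r hr)
  -- the injection ψ from Π into the injective words
  have hrange := PiSet_subset_range_phi r hr
  have hψ : ∀ p : ↥(PiSet ℤ k r), ∃ w : WI k, phi r w = p.val :=
    fun p => hrange p.property
  set ψ : ↥(PiSet ℤ k r) → WI k := fun p => Classical.choose (hψ p) with hψdef
  have hψval : ∀ p, phi r (ψ p) = p.val := fun p => Classical.choose_spec (hψ p)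
  have hψinj : Function.Injective ψ := by
    intro p q hpq
    apply Subtype.ext
    rw [← hψval p, ← hψval q, hpq]
  -- the family
  set v : ↥(PiSet ℤ k r) → ↥(wordsLen ℤ k k) := fun p => ⟨p.val, hsub p.property⟩ with hv
  -- spanning
  have hvspan : Submodule.span ℤ (Set.range v) = ⊤ := by
    apply Submodule.map_injective_of_injective (wordsLen ℤ k k).injective_subtype
    rw [Submodule.map_span, Submodule.map_subtype_top]
    have h1 : (wordsLen ℤ k k).subtype '' Set.range v = PiSet ℤ k r := by
      rw [← Set.range_comp]
      have h2 : (wordsLen ℤ k k).subtype ∘ v = fun p : ↥(PiSet ℤ k r) => p.val := rfl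
      rw [h2]
      exact Subtype.range_coe
    rw [h1, hspan]
  -- linear independence via the endomorphism trick
  have hfin : Module.Finite ℤ (WI k →₀ ℤ) := by
    exact Module.Finite.equiv (Finsupp.linearEquivFunOnFinite ℤ ℤ (WI k)).symm
  set f := Finsupp.linearCombination ℤ v with hf
  have hfsurj : Function.Surjective f := by
    rw [← LinearMap.range_eq_top, Finsupp.range_linearCombination, hvspan]
  set g := (wordsBasis k).repr with hg
  set T : (↥(PiSet ℤ k r) →₀ ℤ) →ₗ[ℤ] (WI k →₀ ℤ) := g.toLinearMap ∘ₗ f with hT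
  have hTsurj : Function.Surjective T := by
    intro y
    obtain ⟨x, hx⟩ := hfsurj (g.symm y)
    exact ⟨x, by simp [hT, hx]⟩
  set pr : (WI k →₀ ℤ) →ₗ[ℤ] (↥(PiSet ℤ k r) →₀ ℤ) := Finsupp.lcomapDomain ψ hψinj with hpr
  have hpri : ∀ x, pr (Finsupp.lmapDomain ℤ ℤ ψ x) = x := by
    intro x
    ext a
    rw [hpr, Finsupp.lcomapDomain]
    simp only [LinearMap.coe_mk, AddHom.coe_mk]
    rw [Finsupp.comapDomain_apply, Finsupp.lmapDomain_apply, Finsupp.mapDomain_apply hψinj]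
  set E : (WI k →₀ ℤ) →ₗ[ℤ] (WI k →₀ ℤ) := T ∘ₗ pr with hE
  have hEsurj : Function.Surjective E := by
    intro y
    obtain ⟨x, hx⟩ := hTsurj y
    refine ⟨Finsupp.lmapDomain ℤ ℤ ψ x, ?_⟩
    rw [hE, LinearMap.comp_apply, hpri, hx]
  have hEinj : Function.Injective E :=
    OrzechProperty.injective_of_surjective_endomorphism E hEsurj
  have hcomp : ∀ x, E (Finsupp.lmapDomain ℤ ℤ ψ x) = T x := by
    intro x
    show T (pr (Finsupp.lmapDomain ℤ ℤ ψ x)) = T x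
    rw [hpri]
  have hTinj : Function.Injective T := by
    intro a b hab
    have : E (Finsupp.lmapDomain ℤ ℤ ψ a) = E (Finsupp.lmapDomain ℤ ℤ ψ b) := by
      rw [hcomp, hcomp, hab]
    have h2 := hEinj this
    exact Finsupp.mapDomain_injective hψinj h2
  have hfinj : Function.Injective f := by
    intro a b hab
    apply hTinj
    show g (f a) = g (f b)
    rw [hab]
  have hli : LinearIndependent ℤ v :=
    linearIndependent_iff_injective_finsuppLinearCombination.mpr hfinj
  refine ⟨Module.Basis.mk hli (by rw [hvspan]), ?_⟩
  intro p
  rw [Module.Basis.mk_apply]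


end PfAux

/-- For any total order on `B = ⊔ B_S`, the set `Π` of ascending products of Reutenauer
basis elements is a ℤ-basis of `C_{k-1}^{(k)}`. -/
theorem PiSet_basis_of_words (k : ℕ) (hk : 2 ≤ k) (r : BIdx ℤ k → BIdx ℤ k → Prop)
    (hr : IsLinearOrder (BIdx ℤ k) r) :
    ∃ b : Module.Basis ↥(PiSet ℤ k r) ℤ ↥(wordsLen ℤ k k),
      ∀ p : ↥(PiSet ℤ k r), (b p).val = p.val := by
  exact PfAux.main_theorem k hk r hr
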